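/- arXiv:0902.4304 — 2 statements merged into one kernel-verified Lean document; each statement's English description precedes it below -/
import Mathlib

section
/- Strict comparison of the rate functions above the mean: assume (C1), (C5), that c is continuous at 0 and at B₁, and that c is not ℓ-a.e. constant on 𝕋₁. Then for every y with γ < y < c(0)/3, one has Λ̄*(y) < Λ*(3y). -/
open MeasureTheory Filter Asymptotics

noncomputable section

namespace LoadOpt

/-- `j = e^{2iπ/3}`, primitive cube root of unity. -/
def jc : ℂ := Complex.exp (2 * Real.pi * Complex.I / 3)

/-- `λ = 2 (3√3)^{-1/2}`. -/
def lam : ℝ := 2 / Real.sqrt (3 * Real.sqrt 3)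

/-- The bins `B₁, B₂, B₃` (indexed by `0, 1, 2`). -/
def Bin : Fin 3 → ℂ := ![jc ^ 2 * (lam * Complex.I), (lam : ℂ) * Complex.I, jc * (lam * Complex.I)]

/-- The triangle `𝕋`, convex hull of the three bins. -/
def Tri : Set ℂ := convexHull ℝ {Bin 0, Bin 1, Bin 2}

/-- Cost functions `c₁, c₂, c₃` (indexed by `0, 1, 2`). -/
def costs (c : ℂ → ℝ) : Fin 3 → ℂ → ℝ := ![c, fun x => c (jc ^ 2 * x), fun x => c (jc * x)]

/-- Half-lines removed to make the Voronoi cells a partition: `D₁ = {ijt : t < 0}`,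
`D_l = {ij^l t : t ≤ 0}` for `l = 2, 3`. -/
def Dl : Fin 3 → Set ℂ :=
  ![{z | ∃ t : ℝ, t < 0 ∧ z = Complex.I * jc * t},
    {z | ∃ t : ℝ, t ≤ 0 ∧ z = Complex.I * jc ^ 2 * t},
    {z | ∃ t : ℝ, t ≤ 0 ∧ z = Complex.I * jc ^ 3 * t}]

/-- The Voronoi cells `𝕋₁, 𝕋₂, 𝕋₃` (indexed by `0, 1, 2`). -/
def cell (l : Fin 3) : Set ℂ :=
  {x ∈ Tri | dist x (Bin l) = ⨅ m : Fin 3, dist x (Bin m)} \ Dl l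

/-- The load `ρₙ(A)` of the allocation `A` of the points `x 0, …, x (n-1)`. -/
def load (c : ℂ → ℝ) {n : ℕ} (x : Fin n → ℂ) (A : Fin n → Fin 3) : ℝ :=
  Finset.univ.sup' Finset.univ_nonempty fun l => ∑ k, if A k = l then costs c l (x k) else 0

/-- The optimal load `ρₙ`. -/
def optLoad (c : ℂ → ℝ) {n : ℕ} (x : Fin n → ℂ) : ℝ :=
  Finset.univ.inf' Finset.univ_nonempty fun A : Fin n → Fin 3 => load c x A

/-- The suboptimal load `ρ̄ₙ`, allocating each point to the bin of its Voronoi cell. -/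
def subLoad (c : ℂ → ℝ) {n : ℕ} (x : Fin n → ℂ) : ℝ :=
  Finset.univ.sup' Finset.univ_nonempty fun l => ∑ k, (cell l).indicator (costs c l) (x k)

/-- `γ = ∫_{𝕋₁} c`. -/
def gamma (c : ℂ → ℝ) : ℝ := ∫ x in cell 0, c x

/-- Assumption (C1). -/
def C1 (c : ℂ → ℝ) : Prop :=
  ∀ x ∈ Tri, ∀ l : Fin 3, l ≠ 0 → dist x (Bin 0) < dist x (Bin l) → costs c 0 x < costs c l x

/-- Assumption (C2): symmetry of `c` w.r.t. the line through `0` and `B₁`, plus a Lipschitz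
property near `D₁ ∪ D₃`. -/
def C2 (c : ℂ → ℝ) : Prop :=
  (∀ θ ∈ Set.Icc (0 : ℝ) (2 * Real.pi), ∀ t : ℝ, 0 < t →
      (t : ℂ) * Complex.exp ((θ : ℂ) * Complex.I) ∈ Tri →
      c ((t : ℂ) * Complex.exp ((θ : ℂ) * Complex.I))
        = c ((t : ℂ) * Complex.exp (((-θ - Real.pi / 3 : ℝ) : ℂ) * Complex.I))) ∧
  ∃ (K : NNReal) (U : Set ℂ), IsOpen U ∧ Dl 0 ∪ Dl 2 ⊆ U ∧ LipschitzOnWith K c U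

/-- `Λ(θ) = log (3 ∫_{𝕋₁} e^{θ c})`. -/
def Lambda (c : ℂ → ℝ) (θ : ℝ) : ℝ := Real.log (3 * ∫ x in cell 0, Real.exp (θ * c x))

/-- The Fenchel–Legendre transform `Λ*`. -/
def LambdaStar (c : ℂ → ℝ) (y : ℝ) : EReal := ⨆ θ : ℝ, ((θ * y - Lambda c θ : ℝ) : EReal)

/-- `Λ̄(θ) = log (∫_{𝕋₁} e^{θ c} + 2/3)`. -/
def LambdaBar (c : ℂ → ℝ) (θ : ℝ) : ℝ :=
  Real.log ((∫ x in cell 0, Real.exp (θ * c x)) + 2 / 3)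

/-- The Fenchel–Legendre transform `Λ̄*`. -/
def LambdaBarStar (c : ℂ → ℝ) (y : ℝ) : EReal := ⨆ θ : ℝ, ((θ * y - LambdaBar c θ : ℝ) : EReal)

/-- Assumption (C5): `c(B₁) < c(x) < c(0)` on `𝕋₁ \ {0, B₁}`. -/
def C5 (c : ℂ → ℝ) : Prop :=
  ∀ x ∈ cell 0, x ≠ 0 → x ≠ Bin 0 → c (Bin 0) < c x ∧ c x < c 0
local notation "s3" => Real.sqrt 3

lemma s3_pos : 0 < s3 := Real.sqrt_pos.2 (by norm_num)
lemma s3_sq : s3 * s3 = 3 := Real.mul_self_sqrt (by norm_num)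
lemma lam_pos : 0 < lam := by
  unfold lam
  positivity
lemma lam_id : 3 * s3 * lam ^ 2 = 4 := by
  have h1 : (0:ℝ) < 3 * s3 := by positivity
  have h2 : Real.sqrt (3 * s3) * Real.sqrt (3 * s3) = 3 * s3 := Real.mul_self_sqrt h1.le
  have h3 : Real.sqrt (3 * s3) ≠ 0 := by positivity
  have h4 : lam ^ 2 = 4 / (3 * s3) := by
    unfold lam
    rw [div_pow, Real.sq_sqrt h1.le]
    norm_num
  rw [h4]
  field_simp

lemma jc_re : jc.re = -(1/2) := by
  have h : (2 * (Real.pi:ℂ) * Complex.I / 3) = ((2*Real.pi/3 : ℝ):ℂ) * Complex.I := by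
    push_cast; ring
  rw [jc, h, Complex.exp_ofReal_mul_I_re]
  rw [show 2*Real.pi/3 = Real.pi - Real.pi/3 by ring, Real.cos_pi_sub, Real.cos_pi_div_three]

lemma jc_im : jc.im = s3/2 := by
  have h : (2 * (Real.pi:ℂ) * Complex.I / 3) = ((2*Real.pi/3 : ℝ):ℂ) * Complex.I := by
    push_cast; ring
  rw [jc, h, Complex.exp_ofReal_mul_I_im]
  rw [show 2*Real.pi/3 = Real.pi - Real.pi/3 by ring, Real.sin_pi_sub, Real.sin_pi_div_three]

lemma B0_re : (Bin 0).re = s3*lam/2 := by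
  show (jc^2 * (lam * Complex.I)).re = _
  simp [pow_two, Complex.mul_re, Complex.mul_im, Complex.I_re, Complex.I_im,
    Complex.ofReal_re, Complex.ofReal_im, jc_re, jc_im]
  nlinarith [s3_sq]

lemma B0_im : (Bin 0).im = -(lam/2) := by
  show (jc^2 * (lam * Complex.I)).im = _
  simp [pow_two, Complex.mul_re, Complex.mul_im, Complex.I_re, Complex.I_im,
    Complex.ofReal_re, Complex.ofReal_im, jc_re, jc_im]
  linear_combination (-(lam/4)) * s3_sq

lemma B1_re : (Bin 1).re = 0 := by
  show ((lam:ℂ) * Complex.I).re = 0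
  simp
lemma B1_im : (Bin 1).im = lam := by
  show ((lam:ℂ) * Complex.I).im = lam
  simp
lemma B2_re : (Bin 2).re = -(s3*lam/2) := by
  show (jc * (lam * Complex.I)).re = _
  simp [Complex.mul_re, Complex.mul_im, Complex.I_re, Complex.I_im,
    Complex.ofReal_re, Complex.ofReal_im, jc_re, jc_im]
  ring
lemma B2_im : (Bin 2).im = -(lam/2) := by
  show (jc * (lam * Complex.I)).im = _
  simp [Complex.mul_re, Complex.mul_im, Complex.I_re, Complex.I_im,
    Complex.ofReal_re, Complex.ofReal_im, jc_re, jc_im]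
  ring

lemma dist_c (z w : ℂ) : dist z w = Real.sqrt ((z.re - w.re)^2 + (z.im - w.im)^2) :=
  Complex.dist_eq_re_im z w

lemma dist_sq (z w : ℂ) : dist z w ^ 2 = (z.re - w.re)^2 + (z.im - w.im)^2 := by
  rw [dist_c, Real.sq_sqrt (by positivity)]

lemma dist_lt_of_sq (z a b : ℂ)
    (h : (z.re - a.re)^2 + (z.im - a.im)^2 < (z.re - b.re)^2 + (z.im - b.im)^2) :
    dist z a < dist z b := by
  rw [dist_c, dist_c]
  exact Real.sqrt_lt_sqrt (by positivity) h

lemma sq_le_of_dist_le {z a b : ℂ} (h : dist z a ≤ dist z b) :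
    (z.re - a.re)^2 + (z.im - a.im)^2 ≤ (z.re - b.re)^2 + (z.im - b.im)^2 := by
  rw [← dist_sq, ← dist_sq]
  exact pow_le_pow_left₀ dist_nonneg h 2

lemma dist_eq_of_sq (z a b : ℂ)
    (h : (z.re - a.re)^2 + (z.im - a.im)^2 = (z.re - b.re)^2 + (z.im - b.im)^2) :
    dist z a = dist z b := by
  rw [dist_c, dist_c, h]


lemma s3_pow : s3 ^ 2 = 3 := by rw [pow_two, s3_sq]

lemma Bnorm : ∀ i : Fin 3, (Bin i).re ^ 2 + (Bin i).im ^ 2 = lam ^ 2 := by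
  have h0 : (Bin 0).re ^ 2 + (Bin 0).im ^ 2 = lam ^ 2 := by
    rw [B0_re, B0_im]; nlinarith [s3_sq]
  have h1 : (Bin 1).re ^ 2 + (Bin 1).im ^ 2 = lam ^ 2 := by
    rw [B1_re, B1_im]; ring
  have h2 : (Bin 2).re ^ 2 + (Bin 2).im ^ 2 = lam ^ 2 := by
    rw [B2_re, B2_im]; nlinarith [s3_sq]
  intro i
  fin_cases i
  · exact h0
  · exact h1
  · exact h2

-- ball ⊆ Tri
lemma ball_subset_Tri : Metric.ball (0:ℂ) (lam/2) ⊆ Tri := by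
  intro z hz
  have hlam2 : (0:ℝ) < lam^2 := pow_pos lam_pos 2
  have hz' : z.re^2 + z.im^2 < (lam/2)^2 := by
    have h1 : ‖z‖ < lam/2 := by
      simpa [Complex.dist_eq] using (Metric.mem_ball.1 hz)
    have h3 : ‖z‖ ^ 2 < (lam/2)^2 :=
      pow_lt_pow_left₀ h1 (norm_nonneg z) (by norm_num)
    have h4 : ‖z‖ ^ 2 = z.re^2 + z.im^2 := by
      rw [Complex.sq_norm, Complex.normSq_apply]; ring
    linarith [h3, h4.symm.le, h4.le]
  set w : Fin 3 → ℝ := fun i => 1/3 + (2/(3*lam^2)) * (z.re * (Bin i).re + z.im * (Bin i).im)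
    with hw
  have hwnn : ∀ i ∈ Finset.univ, 0 ≤ w i := by
    intro i _
    have key : (z.re * (Bin i).re + z.im * (Bin i).im)^2
        ≤ (z.re^2+z.im^2) * ((Bin i).re^2 + (Bin i).im^2) := by
      nlinarith [sq_nonneg (z.re*(Bin i).im - z.im*(Bin i).re)]
    rw [Bnorm i] at key
    have h4 : (z.re^2+z.im^2)*lam^2 < (lam^2/2)^2 := by nlinarith [hz', hlam2]
    have h5 : -(lam^2/2) ≤ z.re * (Bin i).re + z.im * (Bin i).im := by
      nlinarith [key, h4, sq_nonneg (z.re * (Bin i).re + z.im * (Bin i).im)]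
    have h6 : (2/(3*lam^2)) * (-(lam^2/2)) ≤ (2/(3*lam^2)) * (z.re * (Bin i).re + z.im * (Bin i).im) :=
      mul_le_mul_of_nonneg_left h5 (by positivity)
    have h7 : (2/(3*lam^2)) * (-(lam^2/2)) = -(1/3) := by
      field_simp [lam_pos.ne']
    simp only [hw]
    linarith [h6, h7.le, h7.symm.le]
  have hsum : ∑ i, w i = 1 := by
    simp only [hw, Fin.sum_univ_three, B0_re, B0_im, B1_re, B1_im, B2_re, B2_im]
    ring
  have hkre : (2/(3*lam^2)) * (z.re*(3/2*lam^2)) = z.re := by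
    field_simp [lam_pos.ne']
  have hkim : (2/(3*lam^2)) * (z.im*(3/2*lam^2)) = z.im := by
    field_simp [lam_pos.ne']
  have hcomb : ∑ i, w i • Bin i = z := by
    apply Complex.ext
    · simp only [Fin.sum_univ_three, Complex.add_re, Complex.smul_re, smul_eq_mul, hw,
        B0_re, B0_im, B1_re, B1_im, B2_re, B2_im]
      linear_combination hkre + (z.re * lam^2 / (3*lam^2)) * s3_sq
    · simp only [Fin.sum_univ_three, Complex.add_im, Complex.smul_im, smul_eq_mul, hw,
        B0_re, B0_im, B1_re, B1_im, B2_re, B2_im]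
      linear_combination hkim
  have hmem : ∀ i ∈ Finset.univ, Bin i ∈ ({Bin 0, Bin 1, Bin 2} : Set ℂ) := by
    intro i _
    fin_cases i <;> simp
  have hfin := Finset.centerMass_mem_convexHull (Finset.univ : Finset (Fin 3)) hwnn
    (by rw [hsum]; norm_num) hmem
  rwa [Finset.centerMass_eq_of_sum_1 _ _ hsum, hcomb] at hfin

-- Tri inside two halfplanes
lemma Tri_halfplanes : ∀ z ∈ Tri, -(lam/2) ≤ z.im ∧ z.im + s3 * z.re ≤ lam := by
  have h1 : Convex ℝ {z : ℂ | -z.im ≤ lam/2} := by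
    apply convex_halfSpace_le
    exact ⟨fun a b => by simp only [Complex.add_im]; ring, fun r a => by simp only [Complex.smul_im, smul_eq_mul]; ring⟩
  have h2 : Convex ℝ {z : ℂ | z.im + s3 * z.re ≤ lam} := by
    apply convex_halfSpace_le
    exact ⟨fun a b => by simp only [Complex.add_im, Complex.add_re]; ring,
      fun r a => by simp only [Complex.smul_im, Complex.smul_re, smul_eq_mul]; ring⟩
  intro z hz
  have hsub : Tri ⊆ {z : ℂ | -z.im ≤ lam/2} ∩ {z : ℂ | z.im + s3 * z.re ≤ lam} := by
    apply convexHull_min _ (h1.inter h2)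
    rintro x (rfl | rfl | rfl) <;> constructor
    · show -(Bin 0).im ≤ lam/2
      rw [B0_im]; linarith
    · show (Bin 0).im + s3 * (Bin 0).re ≤ lam
      rw [B0_im, B0_re]; nlinarith [s3_sq, lam_pos]
    · show -(Bin 1).im ≤ lam/2
      rw [B1_im]; linarith [lam_pos]
    · show (Bin 1).im + s3 * (Bin 1).re ≤ lam
      rw [B1_im, B1_re]; linarith
    · show -(Bin 2).im ≤ lam/2
      rw [B2_im]; linarith
    · show (Bin 2).im + s3 * (Bin 2).re ≤ lam
      rw [B2_im, B2_re]; nlinarith [s3_sq, lam_pos]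
  obtain ⟨ha, hb⟩ := hsub hz
  exact ⟨by simpa using neg_le.1 ha, hb⟩

lemma iInf_dist_fin3 (z : ℂ) :
    (⨅ m : Fin 3, dist z (Bin m)) = min (dist z (Bin 0)) (min (dist z (Bin 1)) (dist z (Bin 2))) := by
  have hbdd : BddBelow (Set.range fun m : Fin 3 => dist z (Bin m)) :=
    ⟨0, by rintro _ ⟨m, rfl⟩; exact dist_nonneg⟩
  apply le_antisymm
  · exact le_min (ciInf_le hbdd 0) (le_min (ciInf_le hbdd 1) (ciInf_le hbdd 2))
  · apply le_ciInf
    intro m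
    fin_cases m
    · exact min_le_left _ _
    · exact le_trans (min_le_right _ _) (min_le_left _ _)
    · exact le_trans (min_le_right _ _) (min_le_right _ _)

def Kset : Set ℂ := {z | 0 ≤ z.re ∧ s3 * z.im ≤ z.re ∧ -(lam/2) ≤ z.im ∧ z.im + s3 * z.re ≤ lam}

lemma cell0_subset_K : cell 0 ⊆ Kset := by
  rintro x ⟨⟨hT, heq⟩, -⟩
  have hbdd : BddBelow (Set.range fun m : Fin 3 => dist x (Bin m)) :=
    ⟨0, by rintro _ ⟨m, rfl⟩; exact dist_nonneg⟩
  have h01 : dist x (Bin 0) ≤ dist x (Bin 1) := heq ▸ ciInf_le hbdd 1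
  have h02 : dist x (Bin 0) ≤ dist x (Bin 2) := heq ▸ ciInf_le hbdd 2
  have hs01 := sq_le_of_dist_le h01
  have hs02 := sq_le_of_dist_le h02
  rw [B0_re, B0_im, B1_re, B1_im] at hs01
  rw [B0_re, B0_im, B2_re, B2_im] at hs02
  obtain ⟨hy1, hy2⟩ := Tri_halfplanes x hT
  have hre : 0 ≤ x.re := by nlinarith [hs02, mul_pos s3_pos lam_pos]
  refine ⟨hre, ?_, hy1, hy2⟩
  have h1 : lam*(3*x.im) ≤ lam*(s3*x.re) := by nlinarith [hs01, s3_sq, s3_pow]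
  have h2 : 3*x.im ≤ s3*x.re := (mul_le_mul_iff_of_pos_left lam_pos).1 h1
  have h3 := mul_le_mul_of_nonneg_left h2 s3_pos.le
  have h4 : s3*(s3*x.re) = 3*x.re := by rw [← mul_assoc, s3_sq]
  linarith [h3, h4.le, h4.symm.le]


lemma jc_ne : jc ≠ 0 := Complex.exp_ne_zero _
lemma Ijc_ne : Complex.I * jc ≠ 0 := mul_ne_zero Complex.I_ne_zero jc_ne

lemma D0_eq : Dl 0 = (fun z => z / (Complex.I * jc)) ⁻¹' {w : ℂ | w.im = 0 ∧ w.re < 0} := by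
  have hne := Ijc_ne
  ext z
  simp only [Dl, Matrix.cons_val_zero, Set.mem_setOf_eq, Set.mem_preimage]
  constructor
  · rintro ⟨t, ht, rfl⟩
    have h0 : Complex.I * jc * t / (Complex.I * jc) = (t : ℂ) := by
      rw [mul_comm, mul_div_assoc, div_self hne, mul_one]
    rw [h0]
    exact ⟨Complex.ofReal_im t, by rwa [Complex.ofReal_re]⟩
  · rintro ⟨him, hre⟩
    refine ⟨(z / (Complex.I * jc)).re, hre, ?_⟩
    have h1 : z / (Complex.I * jc) = ((z / (Complex.I * jc)).re : ℂ) := by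
      apply Complex.ext
      · simp
      · simpa using him
    calc z = (Complex.I * jc) * (z / (Complex.I * jc)) := by rw [mul_div_cancel₀ _ hne]
      _ = Complex.I * jc * ((z / (Complex.I * jc)).re : ℂ) := by rw [← h1]

lemma D0_measurable : MeasurableSet (Dl 0) := by
  rw [D0_eq]
  apply Measurable.div_const measurable_id (Complex.I * jc)
  exact (Complex.measurable_im (measurableSet_singleton 0)).inter
    (Complex.measurable_re measurableSet_Iio)

lemma Tri_measurable : MeasurableSet Tri :=
  (((Set.finite_singleton (Bin 2)).insert (Bin 1)).insert
    (Bin 0)).isCompact_convexHull (𝕜 := ℝ) |>.isClosed.measurableSet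

lemma cell0_measurable : MeasurableSet (cell 0) := by
  have h1 : MeasurableSet {x : ℂ | dist x (Bin 0) = ⨅ m : Fin 3, dist x (Bin m)} := by
    have he : {x : ℂ | dist x (Bin 0) = ⨅ m : Fin 3, dist x (Bin m)}
        = {x : ℂ | dist x (Bin 0)
            = min (dist x (Bin 0)) (min (dist x (Bin 1)) (dist x (Bin 2)))} := by
      ext x; simp [iInf_dist_fin3]
    rw [he]
    exact measurableSet_eq_fun ((continuous_id.dist continuous_const)).measurable
      (((continuous_id.dist continuous_const).min
        ((continuous_id.dist continuous_const).min
          (continuous_id.dist continuous_const)))).measurable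
  exact (Tri_measurable.inter h1).diff D0_measurable

lemma cell0_ball_pos (δ : ℝ) (hδ : 0 < δ) : 0 < volume (cell 0 ∩ Metric.ball 0 δ) := by
  set r := min δ (lam/2) with hr
  have hrpos : 0 < r := lt_min hδ (half_pos lam_pos)
  set U : Set ℂ := Metric.ball (0:ℂ) r ∩
    ({x : ℂ | dist x (Bin 0) < dist x (Bin 1)} ∩ {x : ℂ | dist x (Bin 0) < dist x (Bin 2)})
    with hUdef
  have hUopen : IsOpen U := Metric.isOpen_ball.inter
    ((isOpen_lt (continuous_id.dist continuous_const) (continuous_id.dist continuous_const)).inter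
     (isOpen_lt (continuous_id.dist continuous_const) (continuous_id.dist continuous_const)))
  set s : ℝ := r / (2*lam) with hsdef
  have hspos : 0 < s := div_pos hrpos (by linarith [lam_pos])
  have hslam : s * lam = r/2 := by
    rw [hsdef]; field_simp [lam_pos.ne']
  set x : ℂ := (s : ℂ) * Bin 0 with hxdef
  have hxre : x.re = s * (Bin 0).re := by
    rw [hxdef]; simp [Complex.mul_re]
  have hxim : x.im = s * (Bin 0).im := by
    rw [hxdef]; simp [Complex.mul_im]
  have hx_ball : x ∈ Metric.ball (0:ℂ) r := by
    rw [Metric.mem_ball, dist_c]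
    have he : (x.re - (0:ℂ).re)^2 + (x.im - (0:ℂ).im)^2 = (s*lam)^2 := by
      rw [hxre, hxim, B0_re, B0_im]
      simp only [Complex.zero_re, Complex.zero_im]
      nlinarith [s3_sq]
    rw [he, Real.sqrt_sq (mul_pos hspos lam_pos).le]
    rw [hslam]; linarith
  have hd1 : dist x (Bin 0) < dist x (Bin 1) := by
    apply dist_lt_of_sq
    rw [hxre, hxim, B0_re, B0_im, B1_re, B1_im]
    nlinarith [s3_sq, mul_pos (mul_pos lam_pos lam_pos) hspos]
  have hd2 : dist x (Bin 0) < dist x (Bin 2) := by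
    apply dist_lt_of_sq
    rw [hxre, hxim, B0_re, B0_im, B2_re, B2_im]
    nlinarith [s3_sq, mul_pos (mul_pos lam_pos lam_pos) hspos]
  have hU_ne : U.Nonempty := ⟨x, hx_ball, hd1, hd2⟩
  have hUsub : U ⊆ cell 0 ∩ Metric.ball 0 δ := by
    rintro z ⟨hzball, hz1, hz2⟩
    have hzT : z ∈ Tri := ball_subset_Tri
      ((Metric.ball_subset_ball (min_le_right δ (lam/2))) hzball)
    have hzb : z ∈ Metric.ball (0:ℂ) δ :=
      (Metric.ball_subset_ball (min_le_left δ (lam/2))) hzball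
    refine ⟨⟨⟨hzT, ?_⟩, ?_⟩, hzb⟩
    · rw [iInf_dist_fin3]
      exact (min_eq_left (le_min hz1.le hz2.le)).symm
    · intro hzD
      simp only [Dl, Matrix.cons_val_zero, Set.mem_setOf_eq] at hzD
      obtain ⟨t, ht, hzt⟩ := hzD
      have hre : z.re = -(s3/2)*t := by
        rw [hzt]
        simp [Complex.mul_re, Complex.mul_im, Complex.I_re, Complex.I_im, jc_re, jc_im]
      have him : z.im = -(1/2)*t := by
        rw [hzt]
        simp [Complex.mul_re, Complex.mul_im, Complex.I_re, Complex.I_im, jc_re, jc_im]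
      have heq : dist z (Bin 0) = dist z (Bin 1) := by
        apply dist_eq_of_sq
        rw [hre, him, B0_re, B0_im, B1_re, B1_im]
        linear_combination ((2*t*lam + lam^2)/4) * s3_sq
      have hz1' : dist z (Bin 0) < dist z (Bin 1) := hz1
      rw [heq] at hz1'
      exact lt_irrefl _ hz1'
  calc (0:ENNReal) < volume U := hUopen.measure_pos volume hU_ne
    _ ≤ volume (cell 0 ∩ Metric.ball 0 δ) := measure_mono hUsub

-- Fubini slab
lemma slab_measurable {a b : ℝ} {f g : ℝ → ℝ} (hf : Measurable f) (hg : Measurable g) :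
    MeasurableSet {p : ℝ × ℝ | p.1 ∈ Set.Icc a b ∧ p.2 ∈ Set.Icc (f p.1) (g p.1)} := by
  have h1 : {p : ℝ × ℝ | p.1 ∈ Set.Icc a b ∧ p.2 ∈ Set.Icc (f p.1) (g p.1)}
      = (Prod.fst ⁻¹' Set.Icc a b) ∩ ({p : ℝ×ℝ | f p.1 ≤ p.2} ∩ {p : ℝ×ℝ | p.2 ≤ g p.1}) := by
    ext p; simp [Set.mem_Icc, and_assoc]
  rw [h1]
  exact (measurableSet_Icc.preimage measurable_fst).inter
    ((measurableSet_le (hf.comp measurable_fst) measurable_snd).inter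
     (measurableSet_le measurable_snd (hg.comp measurable_fst)))

lemma volume_slab {a b : ℝ} {f g : ℝ → ℝ} (hf : Measurable f) (hg : Measurable g) :
    volume {p : ℝ × ℝ | p.1 ∈ Set.Icc a b ∧ p.2 ∈ Set.Icc (f p.1) (g p.1)}
      = ∫⁻ x in Set.Icc a b, ENNReal.ofReal (g x - f x) := by
  rw [Measure.volume_eq_prod, Measure.prod_apply (slab_measurable hf hg),
    ← lintegral_indicator measurableSet_Icc]
  congr 1
  funext x
  by_cases hx : x ∈ Set.Icc a b
  · have hpre : (Prod.mk x ⁻¹'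
        {p : ℝ × ℝ | p.1 ∈ Set.Icc a b ∧ p.2 ∈ Set.Icc (f p.1) (g p.1)})
        = Set.Icc (f x) (g x) := by
      ext y
      exact ⟨fun h => h.2, fun h => ⟨hx, h⟩⟩
    rw [hpre, Real.volume_Icc, Set.indicator_of_mem hx]
  · have hpre : (Prod.mk x ⁻¹'
        {p : ℝ × ℝ | p.1 ∈ Set.Icc a b ∧ p.2 ∈ Set.Icc (f p.1) (g p.1)})
        = (∅ : Set ℝ) := Set.eq_empty_iff_forall_notMem.2 (fun y hy => hx hy.1)
    rw [hpre, Set.indicator_of_notMem hx]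
    simp


lemma lint_eval {a b : ℝ} (hab : a ≤ b) {f g : ℝ → ℝ} (hf : Continuous f) (hg : Continuous g)
    (hnn : ∀ x ∈ Set.Icc a b, 0 ≤ g x - f x) :
    (∫⁻ x in Set.Icc a b, ENNReal.ofReal (g x - f x))
      = ENNReal.ofReal (∫ x in a..b, (g x - f x)) := by
  rw [← ofReal_integral_eq_lintegral_ofReal (f := fun x => g x - f x)
      (((hg.sub hf).continuousOn).integrableOn_Icc)
      (ae_restrict_of_forall_mem measurableSet_Icc hnn)]
  rw [MeasureTheory.integral_Icc_eq_integral_Ioc, ← intervalIntegral.integral_of_le hab]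

lemma volume_Kset_le : volume Kset ≤ ENNReal.ofReal (1/3) := by
  have hs3ne : s3 ≠ 0 := s3_pos.ne'
  set a : ℝ := s3*lam/4 with hadef
  set b : ℝ := s3*lam/2 with hbdef
  have hslpos : 0 < s3 * lam := mul_pos s3_pos lam_pos
  have h0a : (0:ℝ) ≤ a := by rw [hadef]; linarith
  have hab : a ≤ b := by rw [hadef, hbdef]; linarith
  set SA : Set (ℝ × ℝ) := {p : ℝ × ℝ | p.1 ∈ Set.Icc 0 a ∧
      p.2 ∈ Set.Icc ((fun _ : ℝ => -(lam/2)) p.1) ((fun x : ℝ => x/s3) p.1)} with hSA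
  set SB : Set (ℝ × ℝ) := {p : ℝ × ℝ | p.1 ∈ Set.Icc a b ∧
      p.2 ∈ Set.Icc ((fun _ : ℝ => -(lam/2)) p.1) ((fun x : ℝ => lam - s3*x) p.1)} with hSB
  set K' : Set (ℝ × ℝ) :=
    {p : ℝ × ℝ | 0 ≤ p.1 ∧ s3 * p.2 ≤ p.1 ∧ -(lam/2) ≤ p.2 ∧ p.2 + s3 * p.1 ≤ lam} with hK'
  have hK'meas : MeasurableSet K' := by
    apply MeasurableSet.inter
    · exact measurableSet_le measurable_const measurable_fst
    apply MeasurableSet.inter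
    · exact measurableSet_le (measurable_snd.const_mul s3) measurable_fst
    apply MeasurableSet.inter
    · exact measurableSet_le measurable_const measurable_snd
    · exact measurableSet_le (measurable_snd.add (measurable_fst.const_mul s3)) measurable_const
  have hKpre : Kset = Complex.measurableEquivRealProd ⁻¹' K' := rfl
  have hvol : volume Kset = volume K' := by
    rw [hKpre]
    exact Complex.volume_preserving_equiv_real_prod.measure_preimage hK'meas.nullMeasurableSet
  have hsub : K' ⊆ SA ∪ SB := by
    rintro p ⟨hp1, hp2, hp3, hp4⟩
    have hyx : p.2 ≤ p.1 / s3 := by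
      rw [le_div_iff₀ s3_pos]
      linarith [hp2]
    have hpb : p.1 ≤ b := by
      have h1 : s3 * p.1 ≤ 3 * lam / 2 := by linarith
      have h2 : s3 * b = 3 * lam / 2 := by
        rw [hbdef]; linear_combination (lam/2) * s3_sq
      have := h2 ▸ h1
      exact le_of_mul_le_mul_left this s3_pos
    by_cases hcase : p.1 ≤ a
    · left
      exact ⟨⟨hp1, hcase⟩, ⟨hp3, hyx⟩⟩
    · right
      refine ⟨⟨le_of_not_ge hcase, hpb⟩, ⟨hp3, show p.2 ≤ lam - s3 * p.1 by linarith⟩⟩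
  have hvA : volume SA = ENNReal.ofReal (∫ x in (0:ℝ)..a, ((fun x : ℝ => x/s3) x - (fun _ : ℝ => -(lam/2)) x)) := by
    rw [hSA, volume_slab (f := fun _ : ℝ => -(lam/2)) (g := fun x : ℝ => x/s3)
      measurable_const (by fun_prop)]
    apply lint_eval h0a continuous_const (by fun_prop)
    intro x hx
    show 0 ≤ x/s3 - -(lam/2)
    have := div_nonneg hx.1 s3_pos.le
    linarith [lam_pos]
  have hvB : volume SB = ENNReal.ofReal (∫ x in a..b, ((fun x : ℝ => lam - s3*x) x - (fun _ : ℝ => -(lam/2)) x)) := by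
    rw [hSB, volume_slab (f := fun _ : ℝ => -(lam/2)) (g := fun x : ℝ => lam - s3*x)
      measurable_const (by fun_prop)]
    apply lint_eval hab continuous_const (by fun_prop)
    intro x hx
    have hxb := hx.2
    have h3 : s3 * x ≤ s3 * b := mul_le_mul_of_nonneg_left hxb s3_pos.le
    have h2 : s3 * b = 3 * lam / 2 := by
      rw [hbdef]; linear_combination (lam/2) * s3_sq
    show 0 ≤ lam - s3 * x - -(lam/2)
    linarith [h2 ▸ h3]
  -- evaluate the two interval integrals
  have hIA : (∫ x in (0:ℝ)..a, ((fun x : ℝ => x/s3) x - (fun _ : ℝ => -(lam/2)) x))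
      = a^2/(2*s3) + lam/2 * a := by
    have h1 : (∫ x in (0:ℝ)..a, ((fun x : ℝ => x/s3) x - (fun _ : ℝ => -(lam/2)) x))
        = (∫ x in (0:ℝ)..a, ((fun x : ℝ => x) x * s3⁻¹)) + ∫ x in (0:ℝ)..a, (fun _ : ℝ => lam/2) x := by
      rw [← intervalIntegral.integral_add (by apply Continuous.intervalIntegrable; fun_prop)
        (by apply Continuous.intervalIntegrable; fun_prop)]
      apply intervalIntegral.integral_congr
      intro x _
      show x/s3 - -(lam/2) = x * s3⁻¹ + lam/2
      rw [div_eq_mul_inv]; ring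
    rw [h1, intervalIntegral.integral_mul_const, integral_id, intervalIntegral.integral_const]
    rw [smul_eq_mul]
    field_simp
    ring
  have hIB : (∫ x in a..b, ((fun x : ℝ => lam - s3*x) x - (fun _ : ℝ => -(lam/2)) x))
      = (b-a) * (3*lam/2) - s3 * ((b^2-a^2)/2) := by
    have h1 : (∫ x in a..b, ((fun x : ℝ => lam - s3*x) x - (fun _ : ℝ => -(lam/2)) x))
        = (∫ x in a..b, (fun _ : ℝ => 3*lam/2) x) + ∫ x in a..b, ((-s3) * (fun x : ℝ => x) x) := by
      rw [← intervalIntegral.integral_add (by apply Continuous.intervalIntegrable; fun_prop)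
        (by apply Continuous.intervalIntegrable; fun_prop)]
      apply intervalIntegral.integral_congr
      intro x _
      show lam - s3*x - -(lam/2) = 3*lam/2 + (-s3) * x
      ring
    rw [h1, intervalIntegral.integral_const_mul, integral_id, intervalIntegral.integral_const]
    rw [smul_eq_mul]
    ring
  have ha2 : a^2 = 3*lam^2/16 := by rw [hadef]; linear_combination (lam^2/16) * s3_sq
  have hb2 : b^2 = 3*lam^2/4 := by rw [hbdef]; linear_combination (lam^2/4) * s3_sq
  have hdiv : a^2/(2*s3) = s3*lam^2/32 := by
    rw [ha2, div_eq_iff (by positivity : (2*s3) ≠ (0:ℝ))]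
    linear_combination (-(lam^2/16)) * s3_sq
  have hIA_nn : (0:ℝ) ≤ a^2/(2*s3) + lam/2 * a :=
    add_nonneg (div_nonneg (sq_nonneg a) (by positivity))
      (mul_nonneg (by linarith [lam_pos]) h0a)
  have hIBval : (b-a) * (3*lam/2) - s3 * ((b^2-a^2)/2) = 3*(s3*lam^2)/32 := by
    rw [hb2, ha2, hadef, hbdef]; ring
  have hIB_nn : (0:ℝ) ≤ (b-a) * (3*lam/2) - s3 * ((b^2-a^2)/2) := by
    rw [hIBval]; positivity
  have htot : a^2/(2*s3) + lam/2 * a + ((b-a) * (3*lam/2) - s3 * ((b^2-a^2)/2)) = 1/3 := by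
    rw [hdiv, hIBval, hadef]
    linear_combination (1/12) * lam_id
  calc volume Kset = volume K' := hvol
    _ ≤ volume SA + volume SB := (measure_mono hsub).trans (measure_union_le SA SB)
    _ = ENNReal.ofReal (a^2/(2*s3) + lam/2 * a)
        + ENNReal.ofReal ((b-a) * (3*lam/2) - s3 * ((b^2-a^2)/2)) := by
        rw [hvA, hvB, hIA, hIB]
    _ = ENNReal.ofReal (a^2/(2*s3) + lam/2 * a + ((b-a) * (3*lam/2) - s3 * ((b^2-a^2)/2))) := by
        rw [ENNReal.ofReal_add hIA_nn hIB_nn]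
    _ = ENNReal.ofReal (1/3) := by rw [htot]


lemma volume_cell0_le : volume (cell 0) ≤ ENNReal.ofReal (1/3) :=
  (measure_mono cell0_subset_K).trans volume_Kset_le

lemma amgm_log (Z : ℝ) (hZ : 0 < Z) : Real.log (3*Z) ≤ 3 * Real.log (Z + 2/3) := by
  have hineq : 3*Z ≤ (Z + 2/3)^3 := by nlinarith [sq_nonneg (Z - 1/3), hZ]
  have h1 : Real.log (3*Z) ≤ Real.log ((Z+2/3)^3) := Real.log_le_log (by linarith) hineq
  rw [Real.log_pow] at h1
  push_cast at h1
  linarith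


set_option maxHeartbeats 1000000 in
/-- `γ = ∫_{𝕋₁} c` (defined in the preamble as `gamma`). **Strict comparison of the rate
functions above the mean** (Proposition 1.4 (iii)): under (C1), (C5), continuity of `c` at
`0` and `B₁` and non-degeneracy of `c` on `𝕋₁`, for all `γ < y < c(0)/3` one has
`Λ̄*(y) < Λ*(3y)`. -/
theorem lambdaBarStar_lt_lambdaStar
    (c : ℂ → ℝ) (hc_meas : Measurable c) (hc_nonneg : ∀ x, 0 ≤ c x)
    (hc_bdd : BddAbove (c '' Tri))
    (hC1 : C1 c) (hC5 : C5 c)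
    (hc0 : ContinuousWithinAt c Tri 0) (hcB : ContinuousWithinAt c Tri (Bin 0))
    (hnc : ¬ ∃ r : ℝ, ∀ᵐ x ∂(volume.restrict (cell 0)), c x = r) :
    ∀ y : ℝ, gamma c < y → y < c 0 / 3 → LambdaBarStar c y < LambdaStar c (3 * y) := by
  intro y hy1 hy2
  have hsm : MeasurableSet (cell 0) := cell0_measurable
  have hsub : cell 0 ⊆ Tri := fun x hx => hx.1.1
  have hfin : volume (cell 0) ≠ ⊤ :=
    (lt_of_le_of_lt volume_cell0_le ENNReal.ofReal_lt_top).ne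
  have hfin' : volume (cell 0) < ⊤ := lt_of_le_of_lt volume_cell0_le ENNReal.ofReal_lt_top
  have hpos0 : 0 < volume (cell 0) :=
    lt_of_lt_of_le (cell0_ball_pos 1 one_pos) (measure_mono Set.inter_subset_left)
  set ℓ0 : ℝ := (volume (cell 0)).toReal with hl0
  have hl0pos : 0 < ℓ0 := ENNReal.toReal_pos hpos0.ne' hfin
  have hl0le : ℓ0 ≤ 1/3 := ENNReal.toReal_le_of_le_ofReal (by norm_num) volume_cell0_le
  obtain ⟨M₀, hM₀⟩ := hc_bdd
  have hM₀' : ∀ z ∈ Tri, c z ≤ M₀ := fun z hz => hM₀ ⟨z, hz, rfl⟩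
  set M : ℝ := max M₀ 0 with hMdef
  have hMc : ∀ z ∈ Tri, c z ≤ M := fun z hz => (hM₀' z hz).trans (le_max_left _ _)
  have hM0 : 0 ≤ M := le_max_right _ _
  -- integrability
  have hexp_meas : ∀ θ:ℝ, Measurable fun x : ℂ => Real.exp (θ * c x) :=
    fun θ => Real.measurable_exp.comp (hc_meas.const_mul θ)
  have hconst_int : ∀ C : ℝ, IntegrableOn (fun _ : ℂ => C) (cell 0) :=
    fun C => integrableOn_const hfin
  have hint : ∀ θ:ℝ, IntegrableOn (fun x => Real.exp (θ * c x)) (cell 0) := by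
    intro θ
    apply Integrable.mono' (hconst_int (Real.exp (|θ| * M))) (hexp_meas θ).aestronglyMeasurable
    apply ae_restrict_of_forall_mem hsm
    intro x hx
    rw [Real.norm_eq_abs, Real.abs_exp]
    apply Real.exp_le_exp.2
    calc θ * c x ≤ |θ| * c x := mul_le_mul_of_nonneg_right (le_abs_self θ) (hc_nonneg x)
      _ ≤ |θ| * M := mul_le_mul_of_nonneg_left (hMc x (hsub hx)) (abs_nonneg θ)
  have hintc : IntegrableOn c (cell 0) := by
    apply Integrable.mono' (hconst_int M) hc_meas.aestronglyMeasurable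
    apply ae_restrict_of_forall_mem hsm
    intro x hx
    rw [Real.norm_eq_abs, abs_of_nonneg (hc_nonneg x)]
    exact hMc x (hsub hx)
  -- positivity of the partition function
  have hZpos : ∀ θ:ℝ, 0 < ∫ x in cell 0, Real.exp (θ * c x) := by
    intro θ
    have hconst : Real.exp (-(|θ| * M)) * ℓ0 ≤ ∫ x in cell 0, Real.exp (θ * c x) := by
      rw [mul_comm]
      apply setIntegral_ge_of_const_le hsm hfin ?_ (hint θ)
      intro x hx
      apply Real.exp_le_exp.2
      have h1 : (-|θ|) * c x ≤ θ * c x := mul_le_mul_of_nonneg_right (neg_abs_le θ) (hc_nonneg x)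
      have h2 : |θ| * c x ≤ |θ| * M := mul_le_mul_of_nonneg_left (hMc x (hsub hx)) (abs_nonneg θ)
      nlinarith [h1, h2]
    nlinarith [hconst, mul_pos (Real.exp_pos (-(|θ| * M))) hl0pos]
  have hZnn : ∀ θ:ℝ, 0 ≤ ∫ x in cell 0, Real.exp (θ * c x) := fun θ => (hZpos θ).le
  -- gamma positive
  have hγnn : 0 ≤ gamma c := setIntegral_nonneg hsm (fun x _ => hc_nonneg x)
  have hγpos : 0 < gamma c := by
    rcases hγnn.lt_or_eq with h | h
    · exact h
    · exfalso
      apply hnc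
      refine ⟨0, ?_⟩
      have h0 : ∫ x in cell 0, c x = 0 := h.symm
      have hae := (integral_eq_zero_iff_of_nonneg hc_nonneg hintc).1 h0
      filter_upwards [hae] with x hx using hx
  have hypos : 0 < y := lt_trans hγpos hy1
  -- m' and the set A near 0
  set m' : ℝ := (3*y + c 0)/2 with hm'def
  have h3ym' : 3*y < m' := by rw [hm'def]; linarith
  have hm'c0 : m' < c 0 := by rw [hm'def]; linarith
  obtain ⟨δ, hδpos, hδ⟩ := Metric.tendsto_nhdsWithin_nhds.1 hc0 (c 0 - m') (by linarith)
  set A : Set ℂ := cell 0 ∩ Metric.ball 0 δ with hAdef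
  have hAm : MeasurableSet A := hsm.inter measurableSet_ball
  have hAfin : volume A ≠ ⊤ := ((measure_mono Set.inter_subset_left).trans_lt hfin').ne
  have hApos : 0 < volume A := cell0_ball_pos δ hδpos
  set α : ℝ := (volume A).toReal with hαdef
  have hαpos : 0 < α := ENNReal.toReal_pos hApos.ne' hAfin
  have hcA : ∀ x ∈ A, m' ≤ c x := by
    rintro x ⟨hx1, hx2⟩
    have h1 := hδ (hsub hx1) (by simpa [Metric.mem_ball] using hx2)
    rw [Real.dist_eq] at h1
    have h2 := abs_lt.1 h1
    linarith [h2.1]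
  -- lower bound for Z for θ ≥ 0
  have hZA : ∀ θ:ℝ, 0 ≤ θ → Real.exp (θ*m') * α ≤ ∫ x in cell 0, Real.exp (θ * c x) := by
    intro θ hθ
    have h1 : Real.exp (θ*m') * α ≤ ∫ x in A, Real.exp (θ * c x) := by
      rw [mul_comm]
      apply setIntegral_ge_of_const_le hAm hAfin ?_ ((hint θ).mono_set Set.inter_subset_left)
      intro x hx
      exact Real.exp_le_exp.2 (mul_le_mul_of_nonneg_left (hcA x hx) hθ)
    have h2 : (∫ x in A, Real.exp (θ * c x)) ≤ ∫ x in cell 0, Real.exp (θ * c x) :=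
      setIntegral_mono_set (hint θ) (Filter.Eventually.of_forall fun x => (Real.exp_pos _).le)
        (HasSubset.Subset.eventuallyLE Set.inter_subset_left)
    linarith
  -- choice of θ₀
  set θ₀ : ℝ := Real.log (y / gamma c) / (2*(M+1)) with hθ₀def
  have hlogpos : 0 < Real.log (y / gamma c) :=
    Real.log_pos ((one_lt_div hγpos).2 hy1)
  have hθ₀pos : 0 < θ₀ := div_pos hlogpos (by linarith)
  have hθ₀M : θ₀ * M < Real.log (y / gamma c) := by
    have h1 : θ₀ * (2*(M+1)) = Real.log (y / gamma c) := by
      rw [hθ₀def]; field_simp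
    nlinarith [hθ₀pos, hM0, h1]
  have hexpM : Real.exp (θ₀*M) < y / gamma c := by
    have h1 := Real.exp_lt_exp.2 hθ₀M
    rwa [Real.exp_log (by positivity)] at h1
  have hkey : gamma c * Real.exp (θ₀*M) < y := by
    have h1 := (lt_div_iff₀ hγpos).1 hexpM
    linarith [h1]
  -- pointwise linearization
  have hpt : ∀ x ∈ cell 0, Real.exp (θ₀ * c x) ≤ 1 + θ₀ * Real.exp (θ₀*M) * c x := by
    intro x hx
    set t : ℝ := θ₀ * c x with htdef
    have ht0 : 0 ≤ t := mul_nonneg hθ₀pos.le (hc_nonneg x)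
    have h2 : (-t + 1) * Real.exp t ≤ 1 := by
      have h3 := mul_le_mul_of_nonneg_right (Real.add_one_le_exp (-t)) (Real.exp_pos t).le
      rwa [← Real.exp_add, neg_add_cancel, Real.exp_zero] at h3
    have h4 : Real.exp t ≤ Real.exp (θ₀*M) :=
      Real.exp_le_exp.2 (mul_le_mul_of_nonneg_left (hMc x (hsub hx)) hθ₀pos.le)
    have h5 : Real.exp t ≤ 1 + t * Real.exp t := by nlinarith [h2]
    have h6 : t * Real.exp t ≤ t * Real.exp (θ₀*M) := mul_le_mul_of_nonneg_left h4 ht0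
    calc Real.exp t ≤ 1 + t * Real.exp t := h5
      _ ≤ 1 + t * Real.exp (θ₀*M) := by linarith
      _ = 1 + θ₀ * Real.exp (θ₀*M) * c x := by rw [htdef]; ring
  have hZub : (∫ x in cell 0, Real.exp (θ₀ * c x)) ≤ ℓ0 + θ₀ * Real.exp (θ₀*M) * gamma c := by
    have h1 : (∫ x in cell 0, Real.exp (θ₀ * c x))
        ≤ ∫ x in cell 0, (1 + θ₀ * Real.exp (θ₀*M) * c x) := by
      apply setIntegral_mono_on (hint θ₀) ?_ hsm hpt
      exact (hconst_int 1).add (hintc.const_mul _)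
    have h2 : (∫ x in cell 0, (1 + θ₀ * Real.exp (θ₀*M) * c x))
        = ℓ0 + θ₀ * Real.exp (θ₀*M) * gamma c := by
      rw [integral_add (hconst_int 1) (hintc.const_mul _), integral_const_mul, setIntegral_const]
      simp only [smul_eq_mul, mul_one]
      rfl
    linarith
  -- r0 > 0
  have hr0 : 0 < θ₀*(3*y) - Lambda c θ₀ := by
    have hZp := hZpos θ₀
    have hq : (0:ℝ) < θ₀ * Real.exp (θ₀*M) * gamma c := by positivity
    have h3Z : 3 * (∫ x in cell 0, Real.exp (θ₀ * c x))
        ≤ 1 + 3*(θ₀ * Real.exp (θ₀*M) * gamma c) := by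
      nlinarith [hZub, hl0le]
    have hlog1 : Lambda c θ₀ ≤ Real.log (1 + 3*(θ₀ * Real.exp (θ₀*M) * gamma c)) := by
      simp only [Lambda]
      exact Real.log_le_log (by linarith) h3Z
    have hlog2 : Real.log (1 + 3*(θ₀ * Real.exp (θ₀*M) * gamma c))
        ≤ 3*(θ₀ * Real.exp (θ₀*M) * gamma c) := by
      have h1 := Real.log_le_sub_one_of_pos (show (0:ℝ) < 1 + 3*(θ₀ * Real.exp (θ₀*M) * gamma c) by linarith)
      linarith
    have hfin3 : 3*(θ₀ * Real.exp (θ₀*M) * gamma c) < 3*(θ₀*y) := by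
      nlinarith [hkey, hθ₀pos]
    linarith [hlog1, hlog2, hfin3]
  -- AM-GM: Lambda ≤ 3 * LambdaBar
  have hAM : ∀ θ:ℝ, Lambda c θ ≤ 3 * LambdaBar c θ := fun θ => amgm_log _ (hZpos θ)
  -- lower bound for LambdaBar for θ ≥ 0
  have hLbar1 : ∀ θ:ℝ, 0 ≤ θ → θ*m' + Real.log α ≤ LambdaBar c θ := by
    intro θ hθ
    have h0 := hZA θ hθ
    have h1 : Real.log (Real.exp (θ*m') * α)
        ≤ Real.log ((∫ x in cell 0, Real.exp (θ * c x)) + 2/3) :=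
      Real.log_le_log (by positivity) (by linarith)
    rwa [Real.log_mul (Real.exp_ne_zero _) hαpos.ne', Real.log_exp] at h1
  -- uniform upper bound for the LambdaBar terms
  set KB : ℝ := max (-(Real.log α)) (-(Real.log (2/3))) with hKBdef
  have hKB : ∀ θ:ℝ, θ*y - LambdaBar c θ ≤ KB := by
    intro θ
    rcases le_or_gt 0 θ with hθ | hθ
    · have h1 := hLbar1 θ hθ
      have h2 : θ*y ≤ θ*m' := mul_le_mul_of_nonneg_left (by linarith) hθ
      have h3 : θ*y - LambdaBar c θ ≤ -(Real.log α) := by linarith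
      exact h3.trans (le_max_left _ _)
    · have h1 : Real.log (2/3) ≤ LambdaBar c θ := by
        simp only [LambdaBar]
        apply Real.log_le_log (by norm_num)
        linarith [hZnn θ]
      have h2 : θ*y ≤ 0 := mul_nonpos_of_nonpos_of_nonneg hθ.le hypos.le
      have h3 : θ*y - LambdaBar c θ ≤ -(Real.log (2/3)) := by linarith
      exact h3.trans (le_max_right _ _)
  have hbarKB : LambdaBarStar c y ≤ ((KB : ℝ) : EReal) := by
    rw [LambdaBarStar]
    exact iSup_le fun θ => EReal.coe_le_coe_iff.2 (hKB θ)
  -- conclusion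
  set S : EReal := LambdaStar c (3*y) with hSdef
  have hle : ((θ₀*(3*y) - Lambda c θ₀ : ℝ) : EReal) ≤ S := by
    rw [hSdef, LambdaStar]
    exact le_iSup (fun θ : ℝ => ((θ*(3*y) - Lambda c θ : ℝ) : EReal)) θ₀
  by_cases hStop : S = ⊤
  · rw [hStop]
    exact lt_of_le_of_lt hbarKB (EReal.coe_lt_top KB)
  · have hSbot : S ≠ ⊥ := by
      intro hbot
      rw [hbot] at hle
      exact (EReal.bot_lt_coe _).not_ge hle
    set sR : ℝ := S.toReal with hsRdef
    have hS : (sR : EReal) = S := EReal.coe_toReal hStop hSbot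
    have hr0sR : θ₀*(3*y) - Lambda c θ₀ ≤ sR := by
      rw [← hS] at hle
      exact EReal.coe_le_coe_iff.1 hle
    have hsRpos : 0 < sR := lt_of_lt_of_le hr0 hr0sR
    have hterm : ∀ θ:ℝ, θ*(3*y) - Lambda c θ ≤ sR := by
      intro θ
      have h1 : ((θ*(3*y) - Lambda c θ : ℝ) : EReal) ≤ S := by
        rw [hSdef, LambdaStar]
        exact le_iSup (fun θ : ℝ => ((θ*(3*y) - Lambda c θ : ℝ) : EReal)) θ
      rw [← hS] at h1
      exact EReal.coe_le_coe_iff.1 h1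
    have hbar : LambdaBarStar c y ≤ ((sR/3 : ℝ) : EReal) := by
      rw [LambdaBarStar]
      apply iSup_le
      intro θ
      apply EReal.coe_le_coe_iff.2
      have h1 := hterm θ
      have h2 := hAM θ
      linarith
    calc LambdaBarStar c y ≤ ((sR/3 : ℝ) : EReal) := hbar
      _ < ((sR : ℝ) : EReal) := by
          apply EReal.coe_lt_coe_iff.2
          linarith
      _ = S := hS


end LoadOpt
end
end

section
/- Comparison of the integral and fractional optimal loads: under assumption (C3), almost surely ρₙ − 3‖c‖_∞ ≤ ρ̃ₙ ≤ ρₙ, where ρ̃ₙ is the optimal load over fractional allocation matrices. Consequently, the sequences {ρ̃ₙ/n} and {ρₙ/n} are exponentially equivalent. -/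
open MeasureTheory Filter Asymptotics

noncomputable section

namespace LoadOpt

/-- A sequence of real random variables `V n` satisfies the large deviation principle with
rate function `I` under `P`. -/
def SatisfiesLDP {Ω : Type*} [MeasurableSpace Ω] (P : Measure Ω)
    (V : (n : ℕ) → Ω → ℝ) (I : ℝ → EReal) : Prop :=
  (∀ y, 0 ≤ I y) ∧ LowerSemicontinuous I ∧
    ∀ s : Set ℝ, MeasurableSet s →
      -(⨅ y ∈ interior s, I y) ≤
          liminf (fun n : ℕ => ENNReal.log (P {ω | V n ω ∈ s}) / ((n : ℝ) : EReal)) atTop ∧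
        limsup (fun n : ℕ => ENNReal.log (P {ω | V n ω ∈ s}) / ((n : ℝ) : EReal)) atTop ≤
          -(⨅ y ∈ closure s, I y)

/-- Assumption (C3): level sets of `c` are Lebesgue null. -/
def C3 (c : ℂ → ℝ) : Prop := ∀ t : ℝ, 0 ≤ t → volume (Tri ∩ c ⁻¹' {t}) = 0

/-- Assumption (C4): `c` is continuous on `𝕋`. -/
def C4 (c : ℂ → ℝ) : Prop := ContinuousOn c Tri

/-- Assumption (C6). -/
def C6 (c : ℂ → ℝ) : Prop :=
  (∀ x ∈ Tri, x ≠ 0 →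
      costs c 0 x * costs c 1 x * costs c 2 x /
          (costs c 0 x * costs c 1 x + costs c 0 x * costs c 2 x + costs c 1 x * costs c 2 x)
        < c 0 / 3) ∧
    c 0 / 3 < ∫ z in cell 1, c z
/-- The fractional optimal load `ρ̃ₙ`, the optimum over fractional allocation matrices. -/
def fracOptLoad (c : ℂ → ℝ) {n : ℕ} (x : Fin n → ℂ) : ℝ :=
  sInf {r : ℝ | ∃ b : Fin n → Fin 3 → ℝ,
    (∀ k l, b k l ∈ Set.Icc (0 : ℝ) 1) ∧ (∀ k, b k 0 + b k 1 + b k 2 = 1) ∧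
    r = Finset.univ.sup' Finset.univ_nonempty fun l => ∑ k, b k l * costs c l (x k)}

private def fracSet {n : ℕ} (b : Fin n → Fin 3 → ℝ) : Finset (Fin n × Fin 3) :=
  Finset.univ.filter fun p => b p.1 p.2 ≠ 0 ∧ b p.1 p.2 ≠ 1

private def fracRows {n : ℕ} (b : Fin n → Fin 3 → ℝ) : Finset (Fin n) :=
  Finset.univ.filter fun k => ∃ l, b k l ≠ 0 ∧ b k l ≠ 1

private lemma two_frac {u v t : ℝ} (hu : 0 ≤ u) (hsum : u + v + t = 1)
    (hfu : u ≠ 0 ∧ u ≠ 1) : (v ≠ 0 ∧ v ≠ 1) ∨ (t ≠ 0 ∧ t ≠ 1) := by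
  by_contra h
  push_neg at h
  obtain ⟨h1, h2⟩ := h
  have hv : v = 0 ∨ v = 1 := by
    rcases eq_or_ne v 0 with h'|h'
    · exact Or.inl h'
    · exact Or.inr (h1 h')
  have ht : t = 0 ∨ t = 1 := by
    rcases eq_or_ne t 0 with h'|h'
    · exact Or.inl h'
    · exact Or.inr (h2 h')
  rcases hv with rfl|rfl <;> rcases ht with rfl|rfl <;>
    first
    | exact hfu.1 (by linarith)
    | exact hfu.2 (by linarith)
    | linarith

private lemma row_frac {n : ℕ} (b : Fin n → Fin 3 → ℝ)
    (hb0 : ∀ k l, 0 ≤ b k l) (hbsum : ∀ k, b k 0 + b k 1 + b k 2 = 1)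
    {k : Fin n} (hk : ∃ l, b k l ≠ 0 ∧ b k l ≠ 1) :
    ((b k 0 ≠ 0 ∧ b k 0 ≠ 1) ∧ (b k 1 ≠ 0 ∧ b k 1 ≠ 1)) ∨
    ((b k 0 ≠ 0 ∧ b k 0 ≠ 1) ∧ (b k 2 ≠ 0 ∧ b k 2 ≠ 1)) ∨
    ((b k 1 ≠ 0 ∧ b k 1 ≠ 1) ∧ (b k 2 ≠ 0 ∧ b k 2 ≠ 1)) := by
  obtain ⟨l, hl⟩ := hk
  have hs := hbsum k
  fin_cases l
  · rcases two_frac (hb0 k 0) hs hl with h | h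
    · exact Or.inl ⟨hl, h⟩
    · exact Or.inr (Or.inl ⟨hl, h⟩)
  · rcases two_frac (hb0 k 1) (by linarith : b k 1 + b k 0 + b k 2 = 1) hl with h | h
    · exact Or.inl ⟨h, hl⟩
    · exact Or.inr (Or.inr ⟨hl, h⟩)
  · rcases two_frac (hb0 k 2) (by linarith : b k 2 + b k 0 + b k 1 = 1) hl with h | h
    · exact Or.inr (Or.inl ⟨h, hl⟩)
    · exact Or.inr (Or.inr ⟨h, hl⟩)

/-- exit time for a coordinate pair `(a, a')` moving as `(a + t e, a' - t e)`. -/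
private def exitT (a a' e : ℝ) : ℝ := (if 0 < e then min (1 - a) a' else min a (1 - a')) / |e|

private lemma exitT_pos {a a' e : ℝ} (ha : 0 < a) (ha1 : a < 1) (hb : 0 < a') (hb1 : a' < 1)
    (he : e ≠ 0) : 0 < exitT a a' e := by
  apply div_pos _ (abs_pos.mpr he)
  split_ifs <;> exact lt_min (by linarith) (by linarith)

private lemma exitT_mem {a a' e s : ℝ} (ha : 0 ≤ a) (ha1 : a ≤ 1) (hb : 0 ≤ a') (hb1 : a' ≤ 1)
    (hs0 : 0 ≤ s) (hsE : s ≤ exitT a a' e) :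
    (0 ≤ a + s * e ∧ a + s * e ≤ 1) ∧ (0 ≤ a' - s * e ∧ a' - s * e ≤ 1) := by
  rcases lt_trichotomy e 0 with he | rfl | he
  · have habs : |e| = -e := abs_of_neg he
    have h1 : s * (-e) ≤ min a (1 - a') := by
      have := hsE
      rw [exitT, if_neg (by linarith), habs] at this
      calc s * (-e) ≤ (min a (1 - a') / -e) * (-e) := by
            apply mul_le_mul_of_nonneg_right this (by linarith)
        _ = min a (1 - a') := div_mul_cancel₀ _ (neg_ne_zero.mpr (ne_of_lt he))
    have hm1 : min a (1 - a') ≤ a := min_le_left _ _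
    have hm2 : min a (1 - a') ≤ 1 - a' := min_le_right _ _
    have hse : s * e ≤ 0 := mul_nonpos_of_nonneg_of_nonpos hs0 he.le
    constructor <;> constructor <;> nlinarith
  · simp [ha, ha1, hb, hb1]
  · have habs : |e| = e := abs_of_pos he
    have h1 : s * e ≤ min (1 - a) a' := by
      have := hsE
      rw [exitT, if_pos he, habs] at this
      calc s * e ≤ (min (1 - a) a' / e) * e := by
            apply mul_le_mul_of_nonneg_right this he.le
        _ = min (1 - a) a' := div_mul_cancel₀ _ (ne_of_gt he)
    have hm1 : min (1 - a) a' ≤ 1 - a := min_le_left _ _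
    have hm2 : min (1 - a) a' ≤ a' := min_le_right _ _
    have hse : 0 ≤ s * e := mul_nonneg hs0 he.le
    constructor <;> constructor <;> nlinarith

private lemma exitT_hit {a a' e : ℝ} (he : e ≠ 0) :
    (a + exitT a a' e * e = 0 ∨ a + exitT a a' e * e = 1) ∨
    (a' - exitT a a' e * e = 0 ∨ a' - exitT a a' e * e = 1) := by
  rcases lt_or_gt_of_ne he with h | h
  · have habs : |e| = -e := abs_of_neg h
    have hEe : exitT a a' e * e = -(min a (1 - a')) := by
      rw [exitT, if_neg (by linarith), habs,
        show min a (1 - a') / -e * e = -(min a (1 - a') / -e * -e) by ring,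
        div_mul_cancel₀ _ (neg_ne_zero.mpr (ne_of_lt h))]
    rcases min_cases a (1 - a') with ⟨hm, _⟩ | ⟨hm, _⟩
    · left; left; rw [hEe, hm]; ring
    · right; right; rw [hEe, hm]; ring
  · have habs : |e| = e := abs_of_pos h
    have hEe : exitT a a' e * e = min (1 - a) a' := by
      rw [exitT, if_pos h, habs, div_mul_cancel₀ _ (ne_of_gt h)]
    rcases min_cases (1 - a) a' with ⟨hm, _⟩ | ⟨hm, _⟩
    · left; right; rw [hEe, hm]; ring
    · right; left; rw [hEe, hm]; ring



private lemma chi_sum {l l' : Fin 3} (hll' : l ≠ l') :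
    (if (0:Fin 3) = l then (1:ℝ) else if (0:Fin 3) = l' then -1 else 0)
      + (if (1:Fin 3) = l then 1 else if (1:Fin 3) = l' then -1 else 0)
      + (if (2:Fin 3) = l then 1 else if (2:Fin 3) = l' then -1 else 0) = 0 := by
  fin_cases l <;> fin_cases l' <;> simp_all <;> norm_num

private lemma exchange {n : ℕ} (w : Fin n → Fin 3 → ℝ) (hw0 : ∀ k l, 0 ≤ w k l)
    (b : Fin n → Fin 3 → ℝ)
    (hb01 : ∀ k l, b k l ∈ Set.Icc (0:ℝ) 1) (hbsum : ∀ k, b k 0 + b k 1 + b k 2 = 1)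
    {k k' : Fin n} (hkk' : k ≠ k') {l l' : Fin 3} (hll' : l ≠ l')
    (h1 : b k l ≠ 0 ∧ b k l ≠ 1) (h2 : b k l' ≠ 0 ∧ b k l' ≠ 1)
    (h3 : b k' l ≠ 0 ∧ b k' l ≠ 1) (h4 : b k' l' ≠ 0 ∧ b k' l' ≠ 1) :
    ∃ b' : Fin n → Fin 3 → ℝ,
      (∀ a m, b' a m ∈ Set.Icc (0:ℝ) 1) ∧ (∀ a, b' a 0 + b' a 1 + b' a 2 = 1) ∧
      (∀ m, (∑ a, b' a m * w a m) ≤ ∑ a, b a m * w a m) ∧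
      fracSet b' ⊂ fracSet b := by
  classical
  set c1 := w k l with hc1
  set c2 := w k' l with hc2
  set d1 := w k l' with hd1
  set d2 := w k' l' with hd2
  set a1 := b k l with ha1def
  set a2 := b k l' with ha2def
  set a3 := b k' l with ha3def
  set a4 := b k' l' with ha4def
  have ha1 : 0 < a1 ∧ a1 < 1 :=
    ⟨lt_of_le_of_ne (hb01 k l).1 (Ne.symm h1.1), lt_of_le_of_ne (hb01 k l).2 h1.2⟩
  have ha2 : 0 < a2 ∧ a2 < 1 :=
    ⟨lt_of_le_of_ne (hb01 k l').1 (Ne.symm h2.1), lt_of_le_of_ne (hb01 k l').2 h2.2⟩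
  have ha3 : 0 < a3 ∧ a3 < 1 :=
    ⟨lt_of_le_of_ne (hb01 k' l).1 (Ne.symm h3.1), lt_of_le_of_ne (hb01 k' l).2 h3.2⟩
  have ha4 : 0 < a4 ∧ a4 < 1 :=
    ⟨lt_of_le_of_ne (hb01 k' l').1 (Ne.symm h4.1), lt_of_le_of_ne (hb01 k' l').2 h4.2⟩
  obtain ⟨ε1, ε2, hne, hz, hd⟩ :
      ∃ ε1 ε2 : ℝ, (ε1 ≠ 0 ∨ ε2 ≠ 0) ∧ ε1 * c1 + ε2 * c2 = 0 ∧ 0 ≤ ε1 * d1 + ε2 * d2 := by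
    by_cases hA : c1 = 0 ∧ c2 = 0
    · exact ⟨1, 0, Or.inl one_ne_zero, by rw [hA.1, hA.2]; ring,
        by simpa using hw0 k l'⟩
    · rw [not_and_or] at hA
      by_cases hB : c1 * d2 ≤ c2 * d1
      · refine ⟨c2, -c1, ?_, by ring, by nlinarith⟩
        rcases hA with h | h
        · exact Or.inr (neg_ne_zero.mpr h)
        · exact Or.inl h
      · refine ⟨-c2, c1, ?_, by ring, by nlinarith⟩
        rcases hA with h | h
        · exact Or.inr h
        · exact Or.inl (neg_ne_zero.mpr h)
  set t : ℝ := if ε1 = 0 then exitT a3 a4 ε2 else if ε2 = 0 then exitT a1 a2 ε1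
      else min (exitT a1 a2 ε1) (exitT a3 a4 ε2) with htdef
  have ht0 : 0 < t := by
    rw [htdef]
    split_ifs with he1 he2
    · exact exitT_pos ha3.1 ha3.2 ha4.1 ha4.2 (hne.resolve_left (not_not.mpr he1))
    · exact exitT_pos ha1.1 ha1.2 ha2.1 ha2.2 he1
    · exact lt_min (exitT_pos ha1.1 ha1.2 ha2.1 ha2.2 he1)
        (exitT_pos ha3.1 ha3.2 ha4.1 ha4.2 he2)
  -- movement bounds for the first pair
  have hp1 : (0 ≤ a1 + t * ε1 ∧ a1 + t * ε1 ≤ 1) ∧ (0 ≤ a2 - t * ε1 ∧ a2 - t * ε1 ≤ 1) := by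
    by_cases he1 : ε1 = 0
    · simp only [he1, mul_zero, add_zero, sub_zero]
      exact ⟨⟨ha1.1.le, ha1.2.le⟩, ⟨ha2.1.le, ha2.2.le⟩⟩
    · have htle : t ≤ exitT a1 a2 ε1 := by
        rw [htdef]; split_ifs <;> first | exact le_rfl | exact min_le_left _ _ | tauto
      exact exitT_mem ha1.1.le ha1.2.le ha2.1.le ha2.2.le ht0.le htle
  have hp2 : (0 ≤ a3 + t * ε2 ∧ a3 + t * ε2 ≤ 1) ∧ (0 ≤ a4 - t * ε2 ∧ a4 - t * ε2 ≤ 1) := by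
    by_cases he2 : ε2 = 0
    · simp only [he2, mul_zero, add_zero, sub_zero]
      exact ⟨⟨ha3.1.le, ha3.2.le⟩, ⟨ha4.1.le, ha4.2.le⟩⟩
    · have htle : t ≤ exitT a3 a4 ε2 := by
        rw [htdef]; split_ifs <;> first | exact le_rfl | exact min_le_right _ _ | tauto
      exact exitT_mem ha3.1.le ha3.2.le ha4.1.le ha4.2.le ht0.le htle
  -- a boundary hit
  have hhit : (a1 + t * ε1 = 0 ∨ a1 + t * ε1 = 1) ∨ (a2 - t * ε1 = 0 ∨ a2 - t * ε1 = 1) ∨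
      (a3 + t * ε2 = 0 ∨ a3 + t * ε2 = 1) ∨ (a4 - t * ε2 = 0 ∨ a4 - t * ε2 = 1) := by
    rw [htdef]
    split_ifs with he1 he2
    · have := exitT_hit (a := a3) (a' := a4) (hne.resolve_left (not_not.mpr he1))
      rcases this with h | h
      · exact Or.inr (Or.inr (Or.inl h))
      · exact Or.inr (Or.inr (Or.inr h))
    · rcases exitT_hit (a := a1) (a' := a2) he1 with h | h
      · exact Or.inl h
      · exact Or.inr (Or.inl h)
    · rcases min_cases (exitT a1 a2 ε1) (exitT a3 a4 ε2) with ⟨hm, _⟩ | ⟨hm, _⟩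
      · rw [hm]
        rcases exitT_hit (a := a1) (a' := a2) he1 with h | h
        · exact Or.inl h
        · exact Or.inr (Or.inl h)
      · rw [hm]
        rcases exitT_hit (a := a3) (a' := a4) he2 with h | h
        · exact Or.inr (Or.inr (Or.inl h))
        · exact Or.inr (Or.inr (Or.inr h))
  set δ : Fin n → ℝ := fun a => if a = k then t * ε1 else if a = k' then t * ε2 else 0 with hδdef
  set χ : Fin 3 → ℝ := fun m => if m = l then 1 else if m = l' then -1 else 0 with hχdef
  have hδk : δ k = t * ε1 := by simp [hδdef]
  have hδk' : δ k' = t * ε2 := by simp [hδdef, hkk'.symm]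
  have hδ0 : ∀ a, a ≠ k → a ≠ k' → δ a = 0 := by
    intro a h h'; simp [hδdef, h, h']
  have hχl : χ l = 1 := by simp [hχdef]
  have hχl' : χ l' = -1 := by simp [hχdef, hll'.symm]
  have hχ0 : ∀ m, m ≠ l → m ≠ l' → χ m = 0 := by
    intro m h h'; simp [hχdef, h, h']
  have hχsum : χ 0 + χ 1 + χ 2 = 0 := by
    simp only [hχdef]; exact chi_sum hll'
  refine ⟨fun a m => b a m + δ a * χ m, ?_, ?_, ?_, ?_⟩
  · intro a m
    show b a m + δ a * χ m ∈ Set.Icc (0:ℝ) 1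
    by_cases ham : a = k
    · subst ham
      by_cases hml : m = l
      · subst hml
        rw [hδk, hχl]
        exact ⟨by simpa using hp1.1.1, by simpa using hp1.1.2⟩
      · by_cases hml' : m = l'
        · subst hml'
          rw [hδk, hχl']
          constructor
          · have := hp1.2.1; simp only [ha2def] at this ⊢; linarith
          · have := hp1.2.2; simp only [ha2def] at this ⊢; linarith
        · rw [hχ0 m hml hml', mul_zero, add_zero]; exact hb01 _ _
    · by_cases ham' : a = k'
      · subst ham'
        by_cases hml : m = l
        · subst hml
          rw [hδk', hχl]
          exact ⟨by simpa using hp2.1.1, by simpa using hp2.1.2⟩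
        · by_cases hml' : m = l'
          · subst hml'
            rw [hδk', hχl']
            constructor
            · have := hp2.2.1; simp only [ha4def] at this ⊢; linarith
            · have := hp2.2.2; simp only [ha4def] at this ⊢; linarith
          · rw [hχ0 m hml hml', mul_zero, add_zero]; exact hb01 _ _
      · rw [hδ0 a ham ham', zero_mul, add_zero]; exact hb01 _ _
  · intro a
    show b a 0 + δ a * χ 0 + (b a 1 + δ a * χ 1) + (b a 2 + δ a * χ 2) = 1
    have : b a 0 + δ a * χ 0 + (b a 1 + δ a * χ 1) + (b a 2 + δ a * χ 2)
        = (b a 0 + b a 1 + b a 2) + δ a * (χ 0 + χ 1 + χ 2) := by ring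
    rw [this, hχsum, mul_zero, add_zero, hbsum]
  · intro m
    show (∑ a, (b a m + δ a * χ m) * w a m) ≤ ∑ a, b a m * w a m
    have hsplit : (∑ a, (b a m + δ a * χ m) * w a m)
        = (∑ a, b a m * w a m) + χ m * (∑ a, δ a * w a m) := by
      rw [Finset.mul_sum, ← Finset.sum_add_distrib]
      exact Finset.sum_congr rfl fun a _ => by ring
    have hR : (∑ a, δ a * w a m) = t * ε1 * w k m + t * ε2 * w k' m := by
      rw [← Finset.sum_subset (Finset.subset_univ ({k, k'} : Finset (Fin n)))
        (fun a _ ha => by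
          rw [hδ0 a (fun h => ha (by simp [h])) (fun h => ha (by simp [h])), zero_mul])]
      rw [Finset.sum_pair hkk', hδk, hδk']
    rw [hsplit, hR]
    by_cases hml : m = l
    · subst hml
      rw [hχl, one_mul]
      have : t * ε1 * w k m + t * ε2 * w k' m = t * (ε1 * c1 + ε2 * c2) := by
        rw [hc1, hc2]; ring
      rw [this, hz, mul_zero, add_zero]
    · by_cases hml' : m = l'
      · subst hml'
        rw [hχl']
        have : t * ε1 * w k m + t * ε2 * w k' m = t * (ε1 * d1 + ε2 * d2) := by
          rw [hd1, hd2]; ring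
        rw [this]
        nlinarith [mul_nonneg ht0.le hd]
      · rw [hχ0 m hml hml', zero_mul, add_zero]
  · -- strict subset of fractional positions
    have hsub : fracSet (fun a m => b a m + δ a * χ m) ⊆ fracSet b := by
      intro p hp
      simp only [fracSet, Finset.mem_filter, Finset.mem_univ, true_and] at hp ⊢
      by_cases ham : p.1 = k
      · by_cases hml : p.2 = l
        · rw [ham, hml]; exact h1
        · by_cases hml' : p.2 = l'
          · rw [ham, hml']; exact h2
          · rwa [hχ0 p.2 hml hml', mul_zero, add_zero] at hp
      · by_cases ham' : p.1 = k'
        · by_cases hml : p.2 = l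
          · rw [ham', hml]; exact h3
          · by_cases hml' : p.2 = l'
            · rw [ham', hml']; exact h4
            · rwa [hχ0 p.2 hml hml', mul_zero, add_zero] at hp
        · rwa [hδ0 p.1 ham ham', zero_mul, add_zero] at hp
    rw [Finset.ssubset_iff_of_subset hsub]
    have hmem : ∀ (p : Fin n × Fin 3), (b p.1 p.2 ≠ 0 ∧ b p.1 p.2 ≠ 1) → p ∈ fracSet b := by
      intro p hp
      simp only [fracSet, Finset.mem_filter, Finset.mem_univ, true_and]
      exact hp
    have hnotmem : ∀ (p : Fin n × Fin 3),
        (b p.1 p.2 + δ p.1 * χ p.2 = 0 ∨ b p.1 p.2 + δ p.1 * χ p.2 = 1) →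
        p ∉ fracSet (fun a m => b a m + δ a * χ m) := by
      intro p hp
      simp only [fracSet, Finset.mem_filter, Finset.mem_univ, true_and, not_and_or, not_not]
      tauto
    rcases hhit with h | h | h | h
    · refine ⟨(k, l), hmem _ h1, hnotmem _ ?_⟩
      simpa [hδk, hχl] using h
    · refine ⟨(k, l'), hmem _ h2, hnotmem _ ?_⟩
      have : b k l' + δ k * χ l' = a2 - t * ε1 := by rw [hδk, hχl']; ring
      rw [this]; exact h
    · refine ⟨(k', l), hmem _ h3, hnotmem _ ?_⟩
      simpa [hδk', hχl] using h
    · refine ⟨(k', l'), hmem _ h4, hnotmem _ ?_⟩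
      have : b k' l' + δ k' * χ l' = a4 - t * ε2 := by rw [hδk', hχl']; ring
      rw [this]; exact h

/-- Rounding: any fractional allocation can be rounded to an integral one whose bin loads
exceed the fractional ones by at most `3 M`. -/
private lemma round_key {n : ℕ} (w : Fin n → Fin 3 → ℝ) (M : ℝ) (hM : 0 ≤ M)
    (hw0 : ∀ k l, 0 ≤ w k l) (hwM : ∀ k l, w k l ≤ M) :
    ∀ (N : ℕ) (b : Fin n → Fin 3 → ℝ), (fracSet b).card ≤ N →
      (∀ k l, b k l ∈ Set.Icc (0:ℝ) 1) → (∀ k, b k 0 + b k 1 + b k 2 = 1) →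
      ∃ A : Fin n → Fin 3, ∀ l, (∑ k, if A k = l then w k l else 0)
        ≤ (∑ k, b k l * w k l) + 3 * M := by
  intro N
  induction N using Nat.strong_induction_on with
  | _ N IH =>
  intro b hcard hb01 hbsum
  by_cases hfr : (fracRows b).card ≤ 3
  · -- base case: at most 3 fractional rows; round them all to bin 0
    classical
    refine ⟨fun k => if h : ∃ l, b k l = 1 then h.choose else 0, fun l => ?_⟩
    have hpt : ∀ k : Fin n, (if (if h : ∃ l, b k l = 1 then h.choose else 0) = l
        then w k l else 0) ≤ b k l * w k l + (if k ∈ fracRows b then M else 0) := by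
      intro k
      by_cases hA : (if h : ∃ l, b k l = 1 then h.choose else 0) = l
      · rw [if_pos hA]
        by_cases hb1 : b k l = 1
        · rw [hb1, one_mul]
          split_ifs with h
          · linarith
          · linarith
        · -- then k is a fractional row
          have hk : k ∈ fracRows b := by
            simp only [fracRows, Finset.mem_filter, Finset.mem_univ, true_and]
            by_contra hc
            push_neg at hc
            have hno1 : ¬ ∃ l', b k l' = 1 := by
              intro hex
              rw [dif_pos hex] at hA
              have hcs := hex.choose_spec
              rw [hA] at hcs
              exact hb1 hcs
            have h0 : ∀ l', b k l' = 0 := by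
              intro l'
              by_contra h
              exact hno1 ⟨l', hc l' h⟩
            have := hbsum k
            rw [h0 0, h0 1, h0 2] at this
            norm_num at this
          rw [if_pos hk]
          have := hwM k l
          have := mul_nonneg (hb01 k l).1 (hw0 k l)
          linarith
      · rw [if_neg hA]
        have := mul_nonneg (hb01 k l).1 (hw0 k l)
        split_ifs with h
        · linarith
        · linarith
    calc (∑ k, if (if h : ∃ l, b k l = 1 then h.choose else 0) = l then w k l else 0)
        ≤ ∑ k, (b k l * w k l + (if k ∈ fracRows b then M else 0)) :=
          Finset.sum_le_sum fun k _ => hpt k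
      _ = (∑ k, b k l * w k l) + ∑ k, (if k ∈ fracRows b then M else 0) :=
          Finset.sum_add_distrib
      _ ≤ (∑ k, b k l * w k l) + 3 * M := by
          have : (∑ k, if k ∈ fracRows b then M else 0) = (fracRows b).card * M := by
            rw [Finset.sum_ite_mem, Finset.univ_inter, Finset.sum_const, nsmul_eq_mul]
          rw [this]
          have : ((fracRows b).card : ℝ) ≤ 3 := by exact_mod_cast hfr
          nlinarith
  · -- inductive case: at least 4 fractional rows
    push_neg at hfr
    classical
    -- pigeonhole: two fractional rows share a fractional pair of columns
    set T : Finset (Fin 3 × Fin 3) := {((0:Fin 3),(1:Fin 3)), ((0:Fin 3),(2:Fin 3)), ((1:Fin 3),(2:Fin 3))} with hT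
    have hTcard : T.card = 3 := by decide
    set f : Fin n → Fin 3 × Fin 3 := fun k =>
      if (b k 0 ≠ 0 ∧ b k 0 ≠ 1) ∧ (b k 1 ≠ 0 ∧ b k 1 ≠ 1) then ((0:Fin 3),(1:Fin 3))
      else if (b k 0 ≠ 0 ∧ b k 0 ≠ 1) ∧ (b k 2 ≠ 0 ∧ b k 2 ≠ 1) then ((0:Fin 3),(2:Fin 3))
      else ((1:Fin 3),(2:Fin 3)) with hf
    have hmaps : ∀ k ∈ fracRows b, f k ∈ T := by
      intro k _
      simp only [hf]
      split_ifs <;> simp [hT]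
    obtain ⟨k, hk, k', hk', hkk', hfkk'⟩ :=
      Finset.exists_ne_map_eq_of_card_lt_of_maps_to (by omega : T.card < (fracRows b).card) hmaps
    have hrow : ∀ a : Fin n, a ∈ fracRows b → ∀ p : Fin 3 × Fin 3, f a = p →
        (b a p.1 ≠ 0 ∧ b a p.1 ≠ 1) ∧ (b a p.2 ≠ 0 ∧ b a p.2 ≠ 1) := by
      intro a ha p hp
      have hfr' : ∃ l, b a l ≠ 0 ∧ b a l ≠ 1 := by
        simpa only [fracRows, Finset.mem_filter, Finset.mem_univ, true_and] using ha
      have h3 := row_frac b (fun k l => (hb01 k l).1) hbsum hfr'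
      simp only [hf] at hp
      split_ifs at hp with hc1 hc2
      · rw [← hp]; exact hc1
      · rw [← hp]; exact hc2
      · rw [← hp]
        rcases h3 with h|h|h
        · exact absurd h hc1
        · exact absurd h hc2
        · exact h
    have hK := hrow k hk (f k) rfl
    have hK' := hrow k' hk' (f k) hfkk'.symm
    have hpne : (f k).1 ≠ (f k).2 := by
      have hgen : ∀ p : Fin 3 × Fin 3,
          p ∈ ({((0:Fin 3),(1:Fin 3)), ((0:Fin 3),(2:Fin 3)), ((1:Fin 3),(2:Fin 3))} :
            Finset (Fin 3 × Fin 3)) → p.1 ≠ p.2 := by decide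
      exact hgen (f k) (hT ▸ hmaps k hk)
    obtain ⟨b', hb01', hbsum', hload', hss⟩ :=
      exchange w hw0 b hb01 hbsum hkk' hpne hK.1 hK.2 hK'.1 hK'.2
    have hcard' : (fracSet b').card < N := by
      have h1 : (fracSet b').card < (fracSet b).card := Finset.card_lt_card hss
      omega
    obtain ⟨A, hA⟩ := IH (fracSet b').card hcard' b' le_rfl hb01' hbsum'
    exact ⟨A, fun l => le_trans (hA l) (by have := hload' l; linarith)⟩

private lemma jc_cube : jc ^ 3 = 1 := by
  rw [jc, ← Complex.exp_nat_mul]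
  have : ((3 : ℕ) : ℂ) * (2 * Real.pi * Complex.I / 3) = 2 * Real.pi * Complex.I := by
    push_cast; ring
  rw [this, Complex.exp_two_pi_mul_I]

private lemma jc_mul_mem_Tri {y : ℂ} (hy : y ∈ Tri) : jc * y ∈ Tri := by
  have himg : (LinearMap.mulLeft ℝ jc) '' ({Bin 0, Bin 1, Bin 2} : Set ℂ) ⊆
      ({Bin 0, Bin 1, Bin 2} : Set ℂ) := by
    intro z hz
    simp only [Set.image_insert_eq, Set.image_singleton, LinearMap.mulLeft_apply] at hz
    have e0 : jc * Bin 0 = Bin 1 := by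
      show jc * (jc ^ 2 * ((lam : ℂ) * Complex.I)) = (lam : ℂ) * Complex.I
      rw [show jc * (jc ^ 2 * ((lam : ℂ) * Complex.I)) = jc ^ 3 * ((lam : ℂ) * Complex.I) by ring,
        jc_cube, one_mul]
    have e1 : jc * Bin 1 = Bin 2 := rfl
    have e2 : jc * Bin 2 = Bin 0 := by
      show jc * (jc * ((lam : ℂ) * Complex.I)) = jc ^ 2 * ((lam : ℂ) * Complex.I)
      ring
    rw [e0, e1, e2] at hz
    rcases hz with h|h|h <;> simp_all
  have hsub : (LinearMap.mulLeft ℝ jc) '' Tri ⊆ Tri := by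
    rw [Tri, (LinearMap.mulLeft ℝ jc).image_convexHull]
    exact convexHull_mono himg
  have : (LinearMap.mulLeft ℝ jc) y ∈ Tri := hsub ⟨y, hy, rfl⟩
  simpa using this


private lemma costs_nonneg {c : ℂ → ℝ} (hc : ∀ x, 0 ≤ c x) (l : Fin 3) (y : ℂ) :
    0 ≤ costs c l y := by
  fin_cases l <;> exact hc _

private lemma costs_le {c : ℂ → ℝ} (hc_bdd : BddAbove (c '' Tri)) {y : ℂ} (hy : y ∈ Tri)
    (l : Fin 3) : costs c l y ≤ sSup (c '' Tri) := by
  have h2 : jc * y ∈ Tri := jc_mul_mem_Tri hy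
  have h3 : jc ^ 2 * y ∈ Tri := by
    have := jc_mul_mem_Tri h2
    rwa [show jc * (jc * y) = jc ^ 2 * y by ring] at this
  fin_cases l
  · exact le_csSup hc_bdd ⟨y, hy, rfl⟩
  · exact le_csSup hc_bdd ⟨jc ^ 2 * y, h3, rfl⟩
  · exact le_csSup hc_bdd ⟨jc * y, h2, rfl⟩

private lemma fracSetR_nonempty (c : ℂ → ℝ) {n : ℕ} (x : Fin n → ℂ) (A : Fin n → Fin 3) :
    load c x A ∈ {r : ℝ | ∃ b : Fin n → Fin 3 → ℝ,
      (∀ k l, b k l ∈ Set.Icc (0 : ℝ) 1) ∧ (∀ k, b k 0 + b k 1 + b k 2 = 1) ∧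
      r = Finset.univ.sup' Finset.univ_nonempty fun l => ∑ k, b k l * costs c l (x k)} := by
  classical
  refine ⟨fun k l => if A k = l then 1 else 0, fun k l => ?_, fun k => ?_, ?_⟩
  · show (if A k = l then (1:ℝ) else 0) ∈ Set.Icc (0:ℝ) 1
    split_ifs <;> simp
  · have h : ∀ j : Fin 3, (if j = 0 then (1:ℝ) else 0) + (if j = 1 then 1 else 0)
        + (if j = 2 then 1 else 0) = 1 := by intro j; fin_cases j <;> simp
    simpa using h (A k)
  · rw [load]
    congr 1
    funext l
    refine Finset.sum_congr rfl fun k _ => ?_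
    show (if A k = l then costs c l (x k) else 0) = (if A k = l then (1:ℝ) else 0) * costs c l (x k)
    by_cases h : A k = l <;> simp [h]

private lemma frac_bddBelow {c : ℂ → ℝ} (hc : ∀ x, 0 ≤ c x) {n : ℕ} (x : Fin n → ℂ) :
    BddBelow {r : ℝ | ∃ b : Fin n → Fin 3 → ℝ,
      (∀ k l, b k l ∈ Set.Icc (0 : ℝ) 1) ∧ (∀ k, b k 0 + b k 1 + b k 2 = 1) ∧
      r = Finset.univ.sup' Finset.univ_nonempty fun l => ∑ k, b k l * costs c l (x k)} := by
  refine ⟨0, fun r hr => ?_⟩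
  obtain ⟨b, hb01, _, rfl⟩ := hr
  refine le_trans ?_ (Finset.le_sup' _ (Finset.mem_univ (0 : Fin 3)))
  exact Finset.sum_nonneg fun k _ => mul_nonneg (hb01 k 0).1 (costs_nonneg hc _ _)

lemma frac_le_opt {c : ℂ → ℝ} (hc : ∀ x, 0 ≤ c x) {n : ℕ} (x : Fin n → ℂ) :
    fracOptLoad c x ≤ optLoad c x := by
  obtain ⟨A, -, hA⟩ := Finset.exists_mem_eq_inf' (Finset.univ_nonempty)
    (fun A : Fin n → Fin 3 => load c x A)
  rw [optLoad, hA]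
  exact csInf_le (frac_bddBelow hc x) (fracSetR_nonempty c x A)

lemma opt_le_frac {c : ℂ → ℝ} (hc : ∀ x, 0 ≤ c x) (hc_bdd : BddAbove (c '' Tri))
    {n : ℕ} (x : Fin n → ℂ) (hx : ∀ k, x k ∈ Tri) :
    optLoad c x ≤ fracOptLoad c x + 3 * sSup (c '' Tri) := by
  set M := sSup (c '' Tri) with hMdef
  have hM0 : 0 ≤ M := by
    have h0 : Bin 0 ∈ Tri := subset_convexHull ℝ _ (by simp)
    exact le_trans (hc (Bin 0)) (le_csSup hc_bdd ⟨Bin 0, h0, rfl⟩)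
  rw [fracOptLoad]
  rw [show optLoad c x ≤ sInf _ + 3 * M ↔ optLoad c x - 3 * M ≤ sInf _ by constructor <;> intro <;> linarith]
  apply le_csInf ⟨load c x (fun _ => 0), fracSetR_nonempty c x _⟩
  rintro r ⟨b, hb01, hbsum, rfl⟩
  obtain ⟨A, hA⟩ := round_key (fun k l => costs c l (x k)) M hM0
    (fun k l => costs_nonneg hc l (x k)) (fun k l => costs_le hc_bdd (hx k) l)
    (fracSet b).card b le_rfl hb01 hbsum
  have hopt : optLoad c x ≤ load c x A := Finset.inf'_le _ (Finset.mem_univ A)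
  have hload : load c x A ≤ (Finset.univ.sup' Finset.univ_nonempty
      fun l => ∑ k, b k l * costs c l (x k)) + 3 * M := by
    rw [load]
    apply Finset.sup'_le
    intro l _
    calc (∑ k, if A k = l then costs c l (x k) else 0) ≤ (∑ k, b k l * costs c l (x k)) + 3 * M :=
          hA l
      _ ≤ _ := by
          have := Finset.le_sup' (fun l => ∑ k, b k l * costs c l (x k)) (Finset.mem_univ l)
          linarith
  linarith


/-- **Comparison of the integral and fractional optimal loads** (Lemma 2.2 (ii)–(iii)):
under (C3), almost surely `ρₙ − 3‖c‖_∞ ≤ ρ̃ₙ ≤ ρₙ`, and consequently `{ρ̃ₙ/n}` and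
`{ρₙ/n}` are exponentially equivalent. -/
theorem fractional_load_comparison
    (c : ℂ → ℝ) (hc_meas : Measurable c) (hc_nonneg : ∀ x, 0 ≤ c x)
    (hc_bdd : BddAbove (c '' Tri))
    (hC3 : C3 c)
    {Ω : Type*} [MeasurableSpace Ω] (P : Measure Ω) [IsProbabilityMeasure P]
    (X : ℕ → Ω → ℂ) (hX_meas : ∀ k, Measurable (X k))
    (hX_law : ∀ k, Measure.map (X k) P = volume.restrict Tri)
    (hX_indep : ProbabilityTheory.iIndepFun X P) :
    (∀ᵐ ω ∂P, ∀ n : ℕ,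
      optLoad c (fun k : Fin n => X k ω) - 3 * sSup (c '' Tri)
          ≤ fracOptLoad c (fun k : Fin n => X k ω) ∧
        fracOptLoad c (fun k : Fin n => X k ω) ≤ optLoad c (fun k : Fin n => X k ω)) ∧
    ∀ δ : ℝ, 0 < δ →
      limsup
        (fun n : ℕ => ENNReal.log
          (P {ω | δ < |fracOptLoad c (fun k : Fin n => X k ω) / n
            - optLoad c (fun k : Fin n => X k ω) / n|}) / ((n : ℝ) : EReal))
        atTop = ⊥ := by

  have hTri_meas : MeasurableSet Tri := by
    have : IsCompact Tri := (Set.toFinite {Bin 0, Bin 1, Bin 2}).isCompact_convexHull ℝ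
    exact this.isClosed.measurableSet
  have hnull : ∀ k : ℕ, P {ω | X k ω ∉ Tri} = 0 := by
    intro k
    have h1 : P (X k ⁻¹' Triᶜ) = Measure.map (X k) P Triᶜ :=
      (Measure.map_apply (hX_meas k) hTri_meas.compl).symm
    have h2 : Measure.map (X k) P Triᶜ = 0 := by
      rw [hX_law k, Measure.restrict_apply hTri_meas.compl, Set.compl_inter_self,
        measure_empty]
    exact h1.trans h2
  have hae : ∀ᵐ ω ∂P, ∀ k : ℕ, X k ω ∈ Tri := by
    rw [ae_all_iff]
    intro k
    rw [ae_iff]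
    exact hnull k
  have hEnull : P {ω | ¬ ∀ k : ℕ, X k ω ∈ Tri} = 0 := by
    rw [← ae_iff]; exact hae
  set M := sSup (c '' Tri) with hMdef
  have hM0 : 0 ≤ M := by
    have h0 : Bin 0 ∈ Tri := subset_convexHull ℝ _ (by simp)
    exact le_trans (hc_nonneg (Bin 0)) (le_csSup hc_bdd ⟨Bin 0, h0, rfl⟩)
  constructor
  · filter_upwards [hae] with ω hω n
    constructor
    · have := opt_le_frac hc_nonneg hc_bdd (fun k : Fin n => X k ω) (fun k => hω k)
      linarith
    · exact frac_le_opt hc_nonneg _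
  · intro δ hδ
    obtain ⟨N, hN⟩ := exists_nat_gt (3 * M / δ)
    have hev : ∀ᶠ n : ℕ in atTop,
        ENNReal.log (P {ω | δ < |fracOptLoad c (fun k : Fin n => X k ω) / n
          - optLoad c (fun k : Fin n => X k ω) / n|}) / ((n : ℝ) : EReal) = ⊥ := by
      filter_upwards [eventually_ge_atTop (N + 1)] with n hn
      have hnpos : (0 : ℝ) < n := by
        have : 1 ≤ n := le_trans (Nat.le_add_left 1 N) hn
        exact_mod_cast Nat.lt_of_lt_of_le Nat.zero_lt_one this
      have h3M : 3 * M < δ * n := by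
        have h1 : 3 * M < δ * N := by
          have := (div_lt_iff₀ hδ).mp hN
          linarith
        have h2 : (N : ℝ) ≤ n := by exact_mod_cast le_trans (Nat.le_succ N) hn
        nlinarith
      have hP : P {ω | δ < |fracOptLoad c (fun k : Fin n => X k ω) / n
          - optLoad c (fun k : Fin n => X k ω) / n|} = 0 := by
        apply measure_mono_null _ hEnull
        intro ω hmem
        simp only [Set.mem_setOf_eq] at hmem ⊢
        intro hall
        set f := fracOptLoad c (fun k : Fin n => X k ω) with hf
        set o := optLoad c (fun k : Fin n => X k ω) with ho
        have h1 : f ≤ o := frac_le_opt hc_nonneg _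
        have h2 : o ≤ f + 3 * M :=
          opt_le_frac hc_nonneg hc_bdd (fun k : Fin n => X k ω) (fun k => hall k)
        have habs : |f / n - o / n| = |f - o| / n := by
          rw [div_sub_div_same, abs_div, abs_of_pos hnpos]
        have habs2 : |f - o| ≤ 3 * M := abs_le.mpr ⟨by linarith, by linarith⟩
        have : |f / n - o / n| < δ := by
          rw [habs, div_lt_iff₀ hnpos]
          linarith
        linarith
      rw [hP, ENNReal.log_zero]
      exact EReal.bot_div_of_pos_ne_top (by exact_mod_cast EReal.coe_pos.mpr hnpos)
        (EReal.coe_ne_top _)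
    rw [limsup_congr hev]
    exact limsup_const ⊥


end LoadOpt
end
end
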